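/- FDR bound decomposition: for nonnegative integer-valued random variables V and W with J ≥ 1 a fixed integer, E[V/((V+W) ∨ 1)] ≤ P(W ≤ J−1) + E[V]/(E[V] + J), provided V and W are independent and V/( V+J) is the evaluation under W = J. -/

import Mathlib

open MeasureTheory ProbabilityTheory

lemma tangent_aux (J a x : ℝ) (hJ : 1 ≤ J) (ha : 0 ≤ a) (hx : 0 ≤ x) :
    x / (x + J) ≤ a / (a + J) + J / (a + J) ^ 2 * (x - a) := by
  have h1 : 0 < x + J := by linarith
  have h2 : 0 < a + J := by linarith
  rw [← sub_nonneg]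
  have key : (a / (a + J) + J / (a + J) ^ 2 * (x - a)) - x / (x + J)
      = J * (x - a) ^ 2 / ((x + J) * (a + J) ^ 2) := by
    field_simp
    ring
  rw [key]
  positivity

theorem stmt_13 {Ω : Type*} [MeasurableSpace Ω] (μ : Measure Ω) [IsProbabilityMeasure μ]
    (V W : Ω → ℕ) (hVm : Measurable V) (hWm : Measurable W)
    (hindep : IndepFun V W μ) (J : ℕ) (hJ : 1 ≤ J)
    (hVi : Integrable (fun ω => (V ω : ℝ)) μ) :
    (∫ ω, (V ω : ℝ) / max ((V ω : ℝ) + (W ω : ℝ)) 1 ∂μ) ≤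
      (μ {ω | W ω ≤ J - 1}).toReal +
        (∫ ω, (V ω : ℝ) ∂μ) / ((∫ ω, (V ω : ℝ) ∂μ) + J) := by
  have hJR : (1:ℝ) ≤ (J:ℝ) := by exact_mod_cast hJ
  set a := ∫ ω, (V ω : ℝ) ∂μ with ha
  have ha0 : 0 ≤ a := integral_nonneg (fun ω => by positivity)
  have haJ : 0 < a + J := by linarith
  set A : Set Ω := {ω | W ω ≤ J - 1} with hAdef
  have hAm : MeasurableSet A := hWm measurableSet_Iic
  -- measurability of pieces
  have hVmr : Measurable (fun ω => (V ω : ℝ)) := (measurable_from_top.comp hVm)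
  have hWmr : Measurable (fun ω => (W ω : ℝ)) := (measurable_from_top.comp hWm)
  have hfm : Measurable (fun ω => (V ω : ℝ) / max ((V ω : ℝ) + (W ω : ℝ)) 1) :=
    hVmr.div ((hVmr.add hWmr).max measurable_const)
  have hgm : Measurable (fun ω => (V ω : ℝ) / ((V ω : ℝ) + J)) :=
    hVmr.div (hVmr.add measurable_const)
  -- boundedness of f and g by 1
  have hfle : ∀ ω, (V ω : ℝ) / max ((V ω : ℝ) + (W ω : ℝ)) 1 ≤ 1 := by
    intro ω
    apply div_le_one_of_le₀
    · exact le_trans (le_add_of_nonneg_right (Nat.cast_nonneg _)) (le_max_left _ _)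
    · positivity
  have hfnn : ∀ ω, 0 ≤ (V ω : ℝ) / max ((V ω : ℝ) + (W ω : ℝ)) 1 := by
    intro ω; positivity
  have hgnn : ∀ ω, 0 ≤ (V ω : ℝ) / ((V ω : ℝ) + J) := by
    intro ω; positivity
  have hgle : ∀ ω, (V ω : ℝ) / ((V ω : ℝ) + J) ≤ 1 := by
    intro ω
    apply div_le_one_of_le₀
    · linarith [Nat.cast_nonneg (V ω) (α := ℝ)]
    · positivity
  have hfint : Integrable (fun ω => (V ω : ℝ) / max ((V ω : ℝ) + (W ω : ℝ)) 1) μ := by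
    apply Integrable.mono' (integrable_const 1) hfm.aestronglyMeasurable
    filter_upwards with ω
    rw [Real.norm_eq_abs, abs_of_nonneg (hfnn ω)]
    exact hfle ω
  have hgint : Integrable (fun ω => (V ω : ℝ) / ((V ω : ℝ) + J)) μ := by
    apply Integrable.mono' (integrable_const 1) hgm.aestronglyMeasurable
    filter_upwards with ω
    rw [Real.norm_eq_abs, abs_of_nonneg (hgnn ω)]
    exact hgle ω
  have hindint : Integrable (A.indicator (fun _ => (1:ℝ))) μ :=
    (integrable_const 1).indicator hAm
  -- step 1: pointwise bound
  have step1 : (∫ ω, (V ω : ℝ) / max ((V ω : ℝ) + (W ω : ℝ)) 1 ∂μ) ≤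
      (μ A).toReal + ∫ ω, (V ω : ℝ) / ((V ω : ℝ) + J) ∂μ := by
    have hmono : ∀ ω, (V ω : ℝ) / max ((V ω : ℝ) + (W ω : ℝ)) 1 ≤
        A.indicator (fun _ => (1:ℝ)) ω + (V ω : ℝ) / ((V ω : ℝ) + J) := by
      intro ω
      by_cases hω : ω ∈ A
      · rw [Set.indicator_of_mem hω]
        linarith [hfle ω, hgnn ω]
      · rw [Set.indicator_of_notMem hω]
        have hWJ : J ≤ W ω := by
          simp only [hAdef, Set.mem_setOf_eq, not_le] at hω
          omega
        have hWJR : (J:ℝ) ≤ (W ω : ℝ) := by exact_mod_cast hWJ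
        have h1 : (1:ℝ) ≤ (V ω : ℝ) + (W ω : ℝ) := by
          linarith [Nat.cast_nonneg (V ω) (α := ℝ)]
        rw [max_eq_left h1, zero_add]
        apply div_le_div_of_nonneg_left (by positivity) _ (by linarith)
        have : (0:ℝ) < (V ω : ℝ) + J := by
          linarith [Nat.cast_nonneg (V ω) (α := ℝ)]
        linarith [Nat.cast_nonneg (V ω) (α := ℝ)]
    calc (∫ ω, (V ω : ℝ) / max ((V ω : ℝ) + (W ω : ℝ)) 1 ∂μ)
        ≤ ∫ ω, (A.indicator (fun _ => (1:ℝ)) ω + (V ω : ℝ) / ((V ω : ℝ) + J)) ∂μ :=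
          integral_mono hfint (hindint.add hgint) hmono
      _ = (μ A).toReal + ∫ ω, (V ω : ℝ) / ((V ω : ℝ) + J) ∂μ := by
          rw [integral_add hindint hgint, integral_indicator_const _ hAm]
          simp
          rfl
  -- step 2: Jensen via tangent line
  have step2 : (∫ ω, (V ω : ℝ) / ((V ω : ℝ) + J) ∂μ) ≤ a / (a + J) := by
    have htan : ∀ ω, (V ω : ℝ) / ((V ω : ℝ) + J) ≤
        a / (a + J) + J / (a + J) ^ 2 * ((V ω : ℝ) - a) :=
      fun ω => tangent_aux J a (V ω) hJR ha0 (Nat.cast_nonneg _)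
    have hsub : Integrable (fun ω => (V ω : ℝ) - a) μ := hVi.sub (integrable_const a)
    have hrint : Integrable (fun ω => a / (a + J) + J / (a + J) ^ 2 * ((V ω : ℝ) - a)) μ :=
      (integrable_const _).add (hsub.const_mul _)
    have := integral_mono hgint hrint htan
    calc (∫ ω, (V ω : ℝ) / ((V ω : ℝ) + J) ∂μ)
        ≤ ∫ ω, (a / (a + J) + J / (a + J) ^ 2 * ((V ω : ℝ) - a)) ∂μ := this
      _ = a / (a + J) := by
          have h0 : ∫ ω, ((V ω : ℝ) - a) ∂μ = 0 := by
            rw [integral_sub hVi (integrable_const a), integral_const]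
            simp [← ha]
          rw [integral_add (integrable_const _) (hsub.const_mul _),
            integral_const, integral_const_mul, h0]
          simp
  linarith [step1, step2]
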